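/- arXiv:2012.11770 — 2 statements merged into one kernel-verified Lean document; each statement's English description precedes it below -/
import Mathlib

section
/- Let p > 3 and 0 ≤ q < p be integers and let 1 ≤ ε ≤ ‖(p,q)‖/2 be a real number. If (r,s) is a pair of coprime positive integers with ‖(r,s)−(p,q)‖ ≤ ε, then setting t₀ = 1 − (B(r,s)·(r,s))/‖(r,s)‖², one has 0 < t₀ < 1 and ‖B(r,s) − (1−t₀)·(p,q)‖ < ε + 1. -/
open scoped InnerProductSpace

/-- The point (x,y) in the Euclidean plane. -/
noncomputable def V (x y : ℝ) : EuclideanSpace ℝ (Fin 2) := WithLp.toLp 2 ![x, y]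


lemma norm_V (x y : ℝ) : ‖V x y‖ = Real.sqrt (x ^ 2 + y ^ 2) := by
  rw [EuclideanSpace.norm_eq]
  simp [V, Fin.sum_univ_two, sq_abs]

lemma inner_V (x y z w : ℝ) : ⟪V x y, V z w⟫_ℝ = x * z + y * w := by
  simp [V, PiLp.inner_apply, Fin.sum_univ_two, mul_comm]

lemma sub_smul_V (x y z w c : ℝ) : V x y - c • V z w = V (x - c*z) (y - c*w) := by
  ext i
  fin_cases i <;> simp [V]

/-- with t₀ = 1 − (B(r,s)·(r,s))/‖(r,s)‖², one has 0 < t₀ < 1 and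
‖B(r,s) − (1−t₀)·(p,q)‖ < ε + 1. Here (a,b) = B(r,s). -/
theorem bezout_approx_alpha (p q r s a b : ℤ) (hp : 3 < p) (hq0 : 0 ≤ q) (hqp : q < p)
    (ε : ℝ) (hε1 : 1 ≤ ε) (hε2 : ε ≤ ‖V (p : ℝ) (q : ℝ)‖ / 2)
    (hr : 0 < r) (hs : 0 < s) (hrs : IsCoprime r s)
    (ha : 0 < a) (har : a ≤ r) (hb : 0 ≤ b) (hbs : b < s)
    (hbez : a * s - b * r = 1)
    (hclose : ‖V (r : ℝ) (s : ℝ) - V (p : ℝ) (q : ℝ)‖ ≤ ε)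
    (t₀ : ℝ)
    (ht₀ : t₀ = 1 - ⟪V (a : ℝ) (b : ℝ), V (r : ℝ) (s : ℝ)⟫_ℝ / ‖V (r : ℝ) (s : ℝ)‖ ^ 2) :
    0 < t₀ ∧ t₀ < 1 ∧
      ‖V (a : ℝ) (b : ℝ) - (1 - t₀) • V (p : ℝ) (q : ℝ)‖ < ε + 1 := by
  have hr1 : (1:ℝ) ≤ (r:ℝ) := by exact_mod_cast hr
  have hs1 : (1:ℝ) ≤ (s:ℝ) := by exact_mod_cast hs
  have ha1 : (1:ℝ) ≤ (a:ℝ) := by exact_mod_cast ha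
  have hb0 : (0:ℝ) ≤ (b:ℝ) := by exact_mod_cast hb
  have har' : (a:ℝ) ≤ r := by exact_mod_cast har
  have hbs' : (b:ℝ) ≤ (s:ℝ) - 1 := by
    have h1 : b + 1 ≤ s := hbs
    have h2 : ((b:ℝ)) + 1 ≤ (s:ℝ) := by exact_mod_cast h1
    linarith
  have hbez' : (a:ℝ) * s - b * r = 1 := by exact_mod_cast hbez
  set R : ℝ := (r:ℝ)^2 + (s:ℝ)^2 with hR
  have hR2 : (2:ℝ) ≤ R := by nlinarith
  have hRpos : (0:ℝ) < R := by linarith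
  have hnv2 : ‖V (r:ℝ) (s:ℝ)‖ ^ 2 = R := by
    rw [norm_V, Real.sq_sqrt (by positivity)]
  have hinner : ⟪V (a:ℝ) (b:ℝ), V (r:ℝ) (s:ℝ)⟫_ℝ = a * r + b * s := inner_V _ _ _ _
  set c : ℝ := ((a:ℝ) * r + b * s) / R with hc
  have ht₀' : t₀ = 1 - c := by rw [ht₀, hinner, hnv2]
  have hcpos : 0 < c := by
    apply div_pos _ hRpos
    nlinarith
  have hclt1 : c < 1 := by
    rw [div_lt_one hRpos]
    nlinarith
  refine ⟨by rw [ht₀']; linarith, by rw [ht₀']; linarith, ?_⟩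
  have h1mt : 1 - t₀ = c := by rw [ht₀']; ring
  rw [h1mt]
  have hsplit : V (a:ℝ) (b:ℝ) - c • V (p:ℝ) (q:ℝ)
      = (V (a:ℝ) (b:ℝ) - c • V (r:ℝ) (s:ℝ)) + c • (V (r:ℝ) (s:ℝ) - V (p:ℝ) (q:ℝ)) := by
    simp [smul_sub]
  rw [hsplit]
  have hRne : R ≠ 0 := ne_of_gt hRpos
  have hcR : c * R = (a:ℝ)*r + b*s := by rw [hc]; field_simp
  have key : ((a:ℝ) - c*r)^2 + ((b:ℝ) - c*s)^2 = 1 / R := by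
    rw [eq_div_iff hRne]
    linear_combination (c*R - ((a:ℝ)*r + b*s)) * hcR +
      ((a:ℝ)*s - b*r + 1) * hbez' + ((a:ℝ)^2 + (b:ℝ)^2) * hR
  have h1 : ‖V (a:ℝ) (b:ℝ) - c • V (r:ℝ) (s:ℝ)‖ < 1 := by
    rw [sub_smul_V, norm_V, key]
    have h := Real.sqrt_lt_sqrt (by positivity : (0:ℝ) ≤ 1/R)
      (by rw [div_lt_one hRpos]; linarith : 1/R < 1)
    simpa using h
  have h2 : ‖c • (V (r:ℝ) (s:ℝ) - V (p:ℝ) (q:ℝ))‖ ≤ ε := by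
    rw [norm_smul, Real.norm_eq_abs, abs_of_pos hcpos]
    calc c * ‖V (r:ℝ) (s:ℝ) - V (p:ℝ) (q:ℝ)‖ ≤ 1 * ε := by
          apply mul_le_mul (le_of_lt hclt1) hclose (norm_nonneg _) zero_le_one
      _ = ε := one_mul ε
  calc ‖(V (a:ℝ) (b:ℝ) - c • V (r:ℝ) (s:ℝ)) + c • (V (r:ℝ) (s:ℝ) - V (p:ℝ) (q:ℝ))‖
      ≤ ‖V (a:ℝ) (b:ℝ) - c • V (r:ℝ) (s:ℝ)‖ + ‖c • (V (r:ℝ) (s:ℝ) - V (p:ℝ) (q:ℝ))‖ :=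
        norm_add_le _ _
    _ < ε + 1 := by linarith
end

section
/- Let p > 3 and 0 ≤ q < p be integers and let 1 ≤ ε ≤ ‖(p,q)‖/2 be a real number. If (r,s) is a pair of coprime positive integers with ‖(r,s)−(p,q)‖ ≤ ε, then setting t₀ = 1 − (B(r,s)·(r,s))/‖(r,s)‖², one has ‖B(s,r) − t₀·(q,p)‖ < ε + 1. -/
open scoped InnerProductSpace

lemma normV (x y : ℝ) : ‖V x y‖ = Real.sqrt (x^2 + y^2) := by
  simp [V, EuclideanSpace.norm_eq, Fin.sum_univ_two, Real.norm_eq_abs, sq_abs]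

lemma innerV (x y z w : ℝ) : ⟪V x y, V z w⟫_ℝ = x*z + y*w := by
  simp [V, EuclideanSpace.inner_eq_star_dotProduct]
  ring

lemma Vsub (x y z w : ℝ) : V x y - V z w = V (x - z) (y - w) := by
  ext i; fin_cases i <;> simp [V]

lemma Vsmul (t x y : ℝ) : t • V x y = V (t*x) (t*y) := by
  ext i; fin_cases i <;> simp [V]

lemma Vadd (x y z w : ℝ) : V x y + V z w = V (x + z) (y + w) := by
  ext i; fin_cases i <;> simp [V]

lemma Vneg (x y : ℝ) : -V x y = V (-x) (-y) := by
  ext i; fin_cases i <;> simp [V]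


set_option maxHeartbeats 1000000 in
/-- with t₀ = 1 − (B(r,s)·(r,s))/‖(r,s)‖², one has
‖B(s,r) − t₀·(q,p)‖ < ε + 1. Here (a,b) = B(r,s) and (c,d) = B(s,r). -/
theorem bezout_approx_beta (p q r s a b c d : ℤ) (hp : 3 < p) (hq0 : 0 ≤ q) (hqp : q < p)
    (ε : ℝ) (hε1 : 1 ≤ ε) (hε2 : ε ≤ ‖V (p : ℝ) (q : ℝ)‖ / 2)
    (hr : 0 < r) (hs : 0 < s) (hrs : IsCoprime r s)
    (ha : 0 < a) (har : a ≤ r) (hb : 0 ≤ b) (hbs : b < s)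
    (hbez : a * s - b * r = 1)
    (hc : 0 < c) (hcs : c ≤ s) (hd : 0 ≤ d) (hdr : d < r)
    (hbez' : c * r - d * s = 1)
    (hclose : ‖V (r : ℝ) (s : ℝ) - V (p : ℝ) (q : ℝ)‖ ≤ ε)
    (t₀ : ℝ)
    (ht₀ : t₀ = 1 - ⟪V (a : ℝ) (b : ℝ), V (r : ℝ) (s : ℝ)⟫_ℝ / ‖V (r : ℝ) (s : ℝ)‖ ^ 2) :
    ‖V (c : ℝ) (d : ℝ) - t₀ • V (q : ℝ) (p : ℝ)‖ < ε + 1 := by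
  -- Step 1: c = s - b and d = r - a over ℤ
  have hdvd : s ∣ c + b := by
    refine hrs.symm.dvd_of_dvd_mul_right ⟨d + a, by linarith⟩
  obtain ⟨k, hk⟩ := hdvd
  have hk1 : k = 1 := by nlinarith
  rw [hk1, mul_one] at hk
  have hcval : c = s - b := by omega
  have hzero : s * (r - a - d) = 0 := by linear_combination hbez' - hbez - r * hcval
  have hdval : d = r - a := by
    rcases mul_eq_zero.mp hzero with h | h
    · omega
    · omega
  -- real versions
  have hbezR : (a:ℝ) * s - (b:ℝ) * r = 1 := by exact_mod_cast congrArg (Int.cast : ℤ → ℝ) hbez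
  have hR1 : (1:ℝ) ≤ (r:ℝ) := by exact_mod_cast (by omega : (1:ℤ) ≤ r)
  have hS1 : (1:ℝ) ≤ (s:ℝ) := by exact_mod_cast (by omega : (1:ℤ) ≤ s)
  have hA1 : (1:ℝ) ≤ (a:ℝ) := by exact_mod_cast (by omega : (1:ℤ) ≤ a)
  have hAR : (a:ℝ) ≤ (r:ℝ) := by exact_mod_cast har
  have hB0 : (0:ℝ) ≤ (b:ℝ) := by exact_mod_cast hb
  have hBS : (b:ℝ) + 1 ≤ (s:ℝ) := by exact_mod_cast (by omega : b + 1 ≤ s)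
  set R := (r:ℝ); set S := (s:ℝ); set A := (a:ℝ); set B := (b:ℝ)
  set P := (p:ℝ); set Q := (q:ℝ)
  have hN : ‖V R S‖ ^ 2 = R^2 + S^2 := by
    rw [normV, Real.sq_sqrt (by positivity)]
  have hNpos : (0:ℝ) < R^2 + S^2 := by positivity
  have hN2 : (2:ℝ) ≤ R^2 + S^2 := by nlinarith
  -- t₀ rewritten
  rw [innerV, hN] at ht₀
  have ht0N : t₀ * (R^2 + S^2) = (R^2 + S^2) - (A * R + B * S) := by
    rw [ht₀]; field_simp
  have ht00 : 0 ≤ t₀ := by nlinarith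
  have ht01 : t₀ ≤ 1 := by nlinarith
  -- decomposition
  set G : EuclideanSpace ℝ (Fin 2) := V (B + (t₀ - 1)*S) (A + (t₀ - 1)*R) with hG
  set h : EuclideanSpace ℝ (Fin 2) := V (S - Q) (R - P) with hh
  have hcR : (c:ℝ) = S - B := by rw [hcval]; push_cast; ring
  have hdR : (d:ℝ) = R - A := by rw [hdval]; push_cast; ring
  have hdecomp : V (c:ℝ) (d:ℝ) - t₀ • V Q P = -G + t₀ • h := by
    rw [hcR, hdR, hG, hh, Vneg, Vsmul, Vsmul, Vadd, Vsub]
    congr 1 <;> ring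
  -- ‖G‖ < 1
  have hGsq : ‖G‖^2 * (R^2 + S^2) = 1 := by
    rw [hG, normV, Real.sq_sqrt (by positivity)]
    linear_combination (A*S - B*R + 1) * hbezR -
      ((1-t₀)*(R^2+S^2) - (A*R+B*S)) * ht0N
  have hGlt : ‖G‖ < 1 := by nlinarith [norm_nonneg G, hGsq, hN2]
  -- ‖h‖ ≤ ε
  have hhle : ‖h‖ ≤ ε := by
    rw [Vsub] at hclose
    rw [hh, normV]
    rw [normV] at hclose
    calc Real.sqrt ((S - Q)^2 + (R - P)^2)
        = Real.sqrt ((R - P)^2 + (S - Q)^2) := by rw [add_comm]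
      _ ≤ ε := hclose
  -- conclude
  rw [hdecomp]
  calc ‖-G + t₀ • h‖ ≤ ‖-G‖ + ‖t₀ • h‖ := norm_add_le _ _
    _ = ‖G‖ + t₀ * ‖h‖ := by rw [norm_neg, norm_smul, Real.norm_eq_abs, abs_of_nonneg ht00]
    _ < 1 + ε := by
        have hle : t₀ * ‖h‖ ≤ ε := by
          calc t₀ * ‖h‖ ≤ 1 * ε := mul_le_mul ht01 hhle (norm_nonneg h) zero_le_one
            _ = ε := one_mul ε
        linarith
    _ = ε + 1 := by ring
end
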